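/- Let r_0(n) denote the number of binary partitions of n with an even number of parts equal to 1 (i.e., with 2 ∣ α_1), with r_0(0) = 1. Then for every integer n ≥ 2: if n ≡ 2 (mod 4), r_0(n) = r_0(n−2) + r_0((n−2)/2); and if n ≡ 0 (mod 4), r_0(n) = r_0(n−2) + r_0(n/2). Moreover r_0(n) = 0 for n odd. -/

import Mathlib

/-- The integer partitioned by the binary partition `α`, where `α i` is the
number of parts equal to `2 ^ i` (so `α i` is the `α_{i+1}` of the paper). -/
def binWeight (α : ℕ →₀ ℕ) : ℕ := α.sum fun i a => a * 2 ^ i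

/-- `r0 n` is the number of binary partitions of `n` with an even number of
parts equal to `1`, i.e. with `2 ∣ α₁` (here `2 ∣ α 0`). -/
noncomputable def r0 (n : ℕ) : ℕ :=
  Nat.card {α : ℕ →₀ ℕ | binWeight α = n ∧ 2 ∣ α 0}

/-! ### Auxiliary material -/

/-- shift a binary partition down by one (drop the parts equal to 1). -/
noncomputable def btail (α : ℕ →₀ ℕ) : ℕ →₀ ℕ :=
  Finsupp.comapDomain Nat.succ α (Nat.succ_injective.injOn)

lemma btail_apply (α : ℕ →₀ ℕ) (i : ℕ) : btail α i = α (i + 1) := rfl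

def succEmb : ℕ ↪ ℕ := ⟨Nat.succ, Nat.succ_injective⟩

noncomputable def bcons (a : ℕ) (β : ℕ →₀ ℕ) : ℕ →₀ ℕ :=
  Finsupp.single 0 a + Finsupp.embDomain succEmb β

lemma bcons_zero (a : ℕ) (β : ℕ →₀ ℕ) : bcons a β 0 = a := by
  have h0 : (0:ℕ) ∉ Set.range succEmb := by
    rintro ⟨x, hx⟩
    exact Nat.succ_ne_zero x hx
  simp [bcons, Finsupp.embDomain_notin_range _ _ _ h0]

lemma bcons_succ (a : ℕ) (β : ℕ →₀ ℕ) (i : ℕ) : bcons a β (i + 1) = β i := by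
  have h2 : (i + 1) = succEmb i := rfl
  rw [bcons, Finsupp.add_apply, h2, Finsupp.embDomain_apply]
  simp [succEmb, Nat.succ_eq_add_one]

lemma btail_bcons (a : ℕ) (β : ℕ →₀ ℕ) : btail (bcons a β) = β := by
  ext i; rw [btail_apply, bcons_succ]

lemma bcons_btail (α : ℕ →₀ ℕ) : bcons (α 0) (btail α) = α := by
  ext i
  cases i with
  | zero => rw [bcons_zero]
  | succ j => rw [bcons_succ, btail_apply]

lemma binWeight_add (α β : ℕ →₀ ℕ) : binWeight (α + β) = binWeight α + binWeight β := by
  unfold binWeight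
  apply Finsupp.sum_add_index' <;> intros <;> ring

lemma binWeight_single (i a : ℕ) : binWeight (Finsupp.single i a) = a * 2 ^ i := by
  unfold binWeight
  exact Finsupp.sum_single_index (by simp)

lemma binWeight_emb (β : ℕ →₀ ℕ) : binWeight (Finsupp.embDomain succEmb β) = 2 * binWeight β := by
  unfold binWeight
  rw [Finsupp.sum_embDomain, Finsupp.mul_sum]
  apply Finsupp.sum_congr
  intro i _
  simp [succEmb, pow_succ]
  ring

lemma binWeight_bcons (a : ℕ) (β : ℕ →₀ ℕ) :
    binWeight (bcons a β) = a + 2 * binWeight β := by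
  rw [bcons, binWeight_add, binWeight_single, binWeight_emb]
  ring

lemma binWeight_eq (α : ℕ →₀ ℕ) : binWeight α = α 0 + 2 * binWeight (btail α) := by
  conv_lhs => rw [← bcons_btail α]
  rw [binWeight_bcons]

/-! ### Finiteness -/

lemma term_le (α : ℕ →₀ ℕ) (n : ℕ) (h : binWeight α = n) (i : ℕ) : α i * 2 ^ i ≤ n := by
  by_cases hi : i ∈ α.support
  · rw [← h]
    exact Finset.single_le_sum (f := fun j => α j * 2 ^ j) (fun j _ => Nat.zero_le _) hi
  · simp [Finsupp.notMem_support_iff.mp hi]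

lemma apply_le (α : ℕ →₀ ℕ) (n : ℕ) (h : binWeight α = n) (i : ℕ) : α i ≤ n := by
  have := term_le α n h i
  have h2 : α i ≤ α i * 2 ^ i := Nat.le_mul_of_pos_right _ (by positivity)
  omega

lemma supp_le (α : ℕ →₀ ℕ) (n : ℕ) (h : binWeight α = n) (i : ℕ) (hi : α i ≠ 0) : i ≤ n := by
  have := term_le α n h i
  have h2 : 2 ^ i ≤ α i * 2 ^ i := Nat.le_mul_of_pos_left _ (Nat.pos_of_ne_zero hi)
  have h3 : i < 2 ^ i := i.lt_two_pow_self
  omega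

lemma finite_S (n : ℕ) : {α : ℕ →₀ ℕ | binWeight α = n}.Finite := by
  apply Set.Finite.of_finite_image
    (f := fun α => fun i : Fin (n+1) => (⟨min (α i.val) n, by omega⟩ : Fin (n+1)))
  · exact Set.toFinite _
  · intro α hα β hβ hfe
    ext i
    by_cases hi : i ≤ n
    · have := congrFun hfe ⟨i, by omega⟩
      have h1 := apply_le α n hα i
      have h2 := apply_le β n hβ i
      simp only [Fin.mk.injEq] at this
      omega
    · have h1 : α i = 0 := by
        by_contra hc; exact hi (supp_le α n hα i hc)
      have h2 : β i = 0 := by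
        by_contra hc; exact hi (supp_le β n hβ i hc)
      rw [h1, h2]

/-! ### Cardinalities -/

/-- number of all binary partitions of `n`. -/
noncomputable def bp (n : ℕ) : ℕ := Set.ncard {α : ℕ →₀ ℕ | binWeight α = n}

lemma ext_zero_tail {α β : ℕ →₀ ℕ} (h0 : α 0 = β 0) (ht : btail α = btail β) : α = β := by
  rw [← bcons_btail α, ← bcons_btail β, h0, ht]

lemma btail_update (α : ℕ →₀ ℕ) (v : ℕ) : btail (Finsupp.update α 0 v) = btail α := by
  ext i
  rw [btail_apply, btail_apply]
  simp [Finsupp.coe_update, Function.update_of_ne (Nat.succ_ne_zero i)]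

lemma update_zero_apply (α : ℕ →₀ ℕ) (v : ℕ) : Finsupp.update α 0 v 0 = v := by
  simp [Finsupp.coe_update]

lemma binWeight_update (α : ℕ →₀ ℕ) (v : ℕ) :
    binWeight (Finsupp.update α 0 v) = v + 2 * binWeight (btail α) := by
  rw [binWeight_eq (Finsupp.update α 0 v), btail_update, update_zero_apply]

lemma r0_even (n : ℕ) (h : 2 ∣ n) : r0 n = bp n := by
  have : {α : ℕ →₀ ℕ | binWeight α = n ∧ 2 ∣ α 0} = {α : ℕ →₀ ℕ | binWeight α = n} := by
    ext α
    simp only [Set.mem_setOf_eq, and_iff_left_iff_imp]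
    intro hw
    have := binWeight_eq α
    omega
  rw [r0, this, bp, ← Nat.card_coe_set_eq]

lemma r0_odd (n : ℕ) (h : Odd n) : r0 n = 0 := by
  have : {α : ℕ →₀ ℕ | binWeight α = n ∧ 2 ∣ α 0} = ∅ := by
    ext α
    simp only [Set.mem_setOf_eq, Set.mem_empty_iff_false, iff_false, not_and]
    intro hw hd
    have := binWeight_eq α
    rcases h with ⟨k, hk⟩
    omega
  rw [r0, this]
  simp

lemma card_shift (n k : ℕ) (hk : k ≤ n) :
    Set.ncard {α : ℕ →₀ ℕ | binWeight α = n ∧ k ≤ α 0} = bp (n - k) := by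
  have hbij : Set.BijOn (fun α => Finsupp.update α 0 (α 0 - k))
      {α : ℕ →₀ ℕ | binWeight α = n ∧ k ≤ α 0} {α : ℕ →₀ ℕ | binWeight α = n - k} := by
    refine ⟨?_, ?_, ?_⟩
    · rintro α ⟨hw, hα⟩
      have h1 := binWeight_update α (α 0 - k)
      have h2 := binWeight_eq α
      simp only [Set.mem_setOf_eq]
      omega
    · rintro α ⟨hw1, hα1⟩ β ⟨hw2, hβ1⟩ he
      simp only at he
      have h0 : α 0 - k = β 0 - k := by
        have := congrArg (fun f => f 0) he
        simpa [update_zero_apply] using this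
      have ht : btail α = btail β := by
        have := congrArg btail he
        simpa [btail_update] using this
      exact ext_zero_tail (by omega) ht
    · rintro β hβ
      simp only [Set.mem_setOf_eq] at hβ
      refine ⟨Finsupp.update β 0 (β 0 + k), ?_, ?_⟩
      · have h1 := binWeight_update β (β 0 + k)
        have h2 := binWeight_eq β
        simp only [Set.mem_setOf_eq, update_zero_apply]
        omega
      · simp only
        apply ext_zero_tail
        · rw [update_zero_apply, update_zero_apply]
          omega
        · rw [btail_update, btail_update]
  rw [bp, ← hbij.image_eq, Set.ncard_image_of_injOn hbij.injOn]

lemma card_tail (n : ℕ) (h : 2 ∣ n) :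
    Set.ncard {α : ℕ →₀ ℕ | binWeight α = n ∧ α 0 = 0} = bp (n / 2) := by
  have hbij : Set.BijOn btail
      {α : ℕ →₀ ℕ | binWeight α = n ∧ α 0 = 0} {β : ℕ →₀ ℕ | binWeight β = n / 2} := by
    refine ⟨?_, ?_, ?_⟩
    · rintro α ⟨hw, hα⟩
      have h2 := binWeight_eq α
      simp only [Set.mem_setOf_eq]
      omega
    · rintro α ⟨hw1, hα1⟩ β ⟨hw2, hβ1⟩ he
      exact ext_zero_tail (by omega) he
    · rintro β hβ
      simp only [Set.mem_setOf_eq] at hβ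
      refine ⟨bcons 0 β, ⟨?_, bcons_zero 0 β⟩, btail_bcons 0 β⟩
      have h1 := binWeight_eq (bcons 0 β)
      rw [bcons_zero, btail_bcons] at h1
      omega
  rw [bp, ← hbij.image_eq, Set.ncard_image_of_injOn hbij.injOn]

lemma bp_rec (n : ℕ) (h2 : 2 ∣ n) (hn : 2 ≤ n) : bp n = bp (n - 2) + bp (n / 2) := by
  have hsplit : {α : ℕ →₀ ℕ | binWeight α = n} =
      {α : ℕ →₀ ℕ | binWeight α = n ∧ 2 ≤ α 0} ∪ {α : ℕ →₀ ℕ | binWeight α = n ∧ α 0 = 0} := by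
    ext α
    simp only [Set.mem_setOf_eq, Set.mem_union]
    constructor
    · intro hw
      have := binWeight_eq α
      rcases h2 with ⟨k, hk⟩
      have : α 0 = 0 ∨ 2 ≤ α 0 := by omega
      tauto
    · tauto
  have hdisj : Disjoint {α : ℕ →₀ ℕ | binWeight α = n ∧ 2 ≤ α 0}
      {α : ℕ →₀ ℕ | binWeight α = n ∧ α 0 = 0} := by
    rw [Set.disjoint_left]
    rintro α ⟨_, h1⟩ ⟨_, h2⟩
    omega
  have hf1 : {α : ℕ →₀ ℕ | binWeight α = n ∧ 2 ≤ α 0}.Finite :=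
    (finite_S n).subset (fun α hα => hα.1)
  have hf2 : {α : ℕ →₀ ℕ | binWeight α = n ∧ α 0 = 0}.Finite :=
    (finite_S n).subset (fun α hα => hα.1)
  rw [bp, hsplit, Set.ncard_union_eq hdisj hf1 hf2, card_shift n 2 hn, card_tail n h2]

lemma bp_odd (n : ℕ) (h : Odd n) : bp n = bp (n - 1) := by
  have hsub : {α : ℕ →₀ ℕ | binWeight α = n} =
      {α : ℕ →₀ ℕ | binWeight α = n ∧ 1 ≤ α 0} := by
    ext α
    simp only [Set.mem_setOf_eq]
    constructor
    · intro hw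
      refine ⟨hw, ?_⟩
      have := binWeight_eq α
      rcases h with ⟨k, hk⟩
      omega
    · tauto
  have hn : 1 ≤ n := by
    rcases h with ⟨k, hk⟩; omega
  rw [bp, hsub, card_shift n 1 hn]

lemma r0_zero : r0 0 = 1 := by
  have hset : {α : ℕ →₀ ℕ | binWeight α = 0 ∧ 2 ∣ α 0} = {0} := by
    ext α
    simp only [Set.mem_setOf_eq, Set.mem_singleton_iff]
    constructor
    · rintro ⟨hw, -⟩
      ext i
      have := apply_le α 0 hw i
      simpa using this
    · rintro rfl
      refine ⟨?_, ⟨0, rfl⟩⟩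
      simp [binWeight]
  rw [r0, hset]
  simp

theorem stmt16 :
    r0 0 = 1 ∧
    (∀ n : ℕ, 2 ≤ n →
      (n % 4 = 2 → r0 n = r0 (n - 2) + r0 ((n - 2) / 2)) ∧
      (n % 4 = 0 → r0 n = r0 (n - 2) + r0 (n / 2))) ∧
    ∀ n : ℕ, Odd n → r0 n = 0 := by
  refine ⟨r0_zero, ?_, fun n hn => r0_odd n hn⟩
  intro n hn
  constructor
  · intro h4
    have h2 : 2 ∣ n := by omega
    have hrec := bp_rec n h2 hn
    have hodd : Odd (n / 2) := by
      refine ⟨(n - 2) / 4, by omega⟩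
    have h1 : bp (n / 2) = bp ((n - 2) / 2) := by
      have := bp_odd (n / 2) hodd
      have : n / 2 - 1 = (n - 2) / 2 := by omega
      rw [bp_odd (n / 2) hodd, this]
    rw [r0_even n h2, r0_even (n - 2) (by omega), r0_even ((n - 2) / 2) (by omega), hrec, h1]
  · intro h4
    have h2 : 2 ∣ n := by omega
    rw [r0_even n h2, r0_even (n - 2) (by omega), r0_even (n / 2) (by omega),
      bp_rec n h2 hn]
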